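/- Let A and B be real n×n matrices such that the product A·B is symmetric and B is symmetric positive definite. Then every eigenvalue of A (an element of the spectrum of A viewed as a complex matrix) is a positive real number if and only if A·B is positive definite; likewise, every eigenvalue of A is a negative real number if and only if A·B is negative definite. -/

import Mathlib

open Matrix
open scoped ComplexOrder
open scoped MatrixOrder

/-- A real symmetric matrix is positive definite: `vᵀPv > 0` for all nonzero `v`. -/
def Matrix.IsPD {n : ℕ} (P : Matrix (Fin n) (Fin n) ℝ) : Prop :=
  Pᵀ = P ∧ ∀ v : Fin n → ℝ, v ≠ 0 → 0 < v ⬝ᵥ (P *ᵥ v)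

/-- A real symmetric matrix is negative definite: `vᵀPv < 0` for all nonzero `v`. -/
def Matrix.IsND {n : ℕ} (P : Matrix (Fin n) (Fin n) ℝ) : Prop :=
  Pᵀ = P ∧ ∀ v : Fin n → ℝ, v ≠ 0 → v ⬝ᵥ (P *ᵥ v) < 0

section helpers

variable {n : ℕ}

private lemma mem_spectrum_iff_exists (C : Matrix (Fin n) (Fin n) ℂ) (μ : ℂ) :
    μ ∈ spectrum ℂ C ↔ ∃ v : Fin n → ℂ, v ≠ 0 ∧ C *ᵥ v = μ • v := by
  classical
  rw [spectrum.mem_iff, Matrix.isUnit_iff_isUnit_det, isUnit_iff_ne_zero, not_ne_iff,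
    ← Matrix.exists_mulVec_eq_zero_iff]
  have key : ∀ v : Fin n → ℂ,
      (algebraMap ℂ (Matrix (Fin n) (Fin n) ℂ) μ - C) *ᵥ v = μ • v - C *ᵥ v := by
    intro v
    rw [Matrix.sub_mulVec, Algebra.algebraMap_eq_smul_one, Matrix.smul_mulVec,
      Matrix.one_mulVec]
  constructor
  · rintro ⟨v, hv, h⟩
    exact ⟨v, hv, by rw [key] at h; exact (sub_eq_zero.mp h).symm⟩
  · rintro ⟨v, hv, h⟩
    exact ⟨v, hv, by rw [key, h, sub_self]⟩

private lemma real_spectrum_mem {M : Matrix (Fin n) (Fin n) ℝ} {t : ℝ}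
    (h : t ∈ spectrum ℝ M) : (t : ℂ) ∈ spectrum ℂ (M.map Complex.ofReal) := by
  classical
  rw [spectrum.mem_iff, Matrix.isUnit_iff_isUnit_det, isUnit_iff_ne_zero, not_ne_iff] at h ⊢
  have hmap : (algebraMap ℂ (Matrix (Fin n) (Fin n) ℂ) (t : ℂ) - M.map Complex.ofReal)
      = (algebraMap ℝ (Matrix (Fin n) (Fin n) ℝ) t - M).map Complex.ofReal := by
    ext i j
    simp [Matrix.algebraMap_matrix_apply, apply_ite]
  rw [hmap, show ((algebraMap ℝ (Matrix (Fin n) (Fin n) ℝ) t - M).map Complex.ofReal)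
      = Complex.ofRealHom.mapMatrix (algebraMap ℝ (Matrix (Fin n) (Fin n) ℝ) t - M) from rfl,
    ← RingHom.map_det, h, map_zero]

private lemma posdef_of_psd_isUnit {𝕜 : Type*} [RCLike 𝕜] {M : Matrix (Fin n) (Fin n) 𝕜}
    (h : M.PosSemidef) (hu : IsUnit M) : M.PosDef := by
  refine posDef_iff_dotProduct_mulVec.mpr ⟨h.1, fun x hx => lt_of_le_of_ne (h.dotProduct_mulVec_nonneg x) fun h0 => hx ?_⟩
  have hMx : M *ᵥ x = 0 := (h.dotProduct_mulVec_zero_iff x).mp h0.symm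
  exact Matrix.mulVec_injective_iff_isUnit.mpr hu (hMx.trans (Matrix.mulVec_zero M).symm)

private lemma posDef_map {M : Matrix (Fin n) (Fin n) ℝ} (hM : M.PosDef) :
    (M.map Complex.ofReal).PosDef := by
  classical
  obtain ⟨S, hS⟩ : ∃ S : Matrix (Fin n) (Fin n) ℝ, M = Sᵀ * S := ⟨CFC.sqrt M, by
    rw [← conjTranspose_eq_transpose_of_trivial, (CFC.sqrt_nonneg M).posSemidef.isHermitian.eq,
      CFC.sqrt_mul_sqrt_self M hM.posSemidef.nonneg]⟩
  have hMc : M.map Complex.ofReal = (S.map Complex.ofReal)ᴴ * (S.map Complex.ofReal) := by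
    rw [hS]
    ext i j
    simp [Matrix.mul_apply, Matrix.conjTranspose_apply, Complex.conj_ofReal]
  have hpsd : (M.map Complex.ofReal).PosSemidef := by
    rw [hMc]; exact Matrix.posSemidef_conjTranspose_mul_self _
  refine posdef_of_psd_isUnit hpsd ?_
  rw [Matrix.isUnit_iff_isUnit_det, isUnit_iff_ne_zero,
    show (M.map Complex.ofReal) = Complex.ofRealHom.mapMatrix M from rfl, ← RingHom.map_det]
  simpa using hM.det_pos.ne'

private lemma posdef_conj {P S : Matrix (Fin n) (Fin n) ℝ} (hP : P.PosDef)
    (hS : Sᵀ = S) (hSu : IsUnit S) : (S * P * S).PosDef := by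
  have hPt : Pᵀ = P := by
    have := hP.1
    rwa [Matrix.IsHermitian, Matrix.conjTranspose_eq_transpose_of_trivial] at this
  refine posDef_iff_dotProduct_mulVec.mpr ⟨?_, ?_⟩
  · rw [Matrix.IsHermitian, Matrix.conjTranspose_eq_transpose_of_trivial,
      Matrix.transpose_mul, Matrix.transpose_mul, hS, hPt, Matrix.mul_assoc]
  · intro x hx
    have hy : S *ᵥ x ≠ 0 := fun h => hx
      (Matrix.mulVec_injective_iff_isUnit.mpr hSu (h.trans (Matrix.mulVec_zero S).symm))
    have hpos := hP.dotProduct_mulVec_pos hy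
    have hxx : x ᵥ* S = S *ᵥ x := by rw [← Matrix.vecMul_transpose, hS]
    have hrw : star x ⬝ᵥ (S * P * S) *ᵥ x = star (S *ᵥ x) ⬝ᵥ P *ᵥ (S *ᵥ x) := by
      rw [show star x = x from funext fun i => star_trivial _,
        show star (S *ᵥ x) = S *ᵥ x from funext fun i => star_trivial _,
        ← Matrix.mulVec_mulVec, ← Matrix.mulVec_mulVec, Matrix.dotProduct_mulVec, hxx]
    rw [hrw]
    exact hpos

private lemma map_mul' (X Y : Matrix (Fin n) (Fin n) ℝ) :
    (X * Y).map Complex.ofReal = X.map Complex.ofReal * Y.map Complex.ofReal := by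
  ext i j
  simp [Matrix.mul_apply]

private lemma map_one' : (1 : Matrix (Fin n) (Fin n) ℝ).map Complex.ofReal = 1 := by
  ext i j
  simp [Matrix.one_apply, apply_ite]

private lemma det_map (X : Matrix (Fin n) (Fin n) ℝ) :
    (X.map Complex.ofReal).det = (X.det : ℂ) := by
  rw [show X.map Complex.ofReal = Complex.ofRealHom.mapMatrix X from rfl, ← RingHom.map_det]
  rfl

end helpers

private lemma key {n : ℕ} (A B : Matrix (Fin n) (Fin n) ℝ)
    (hAB : (A * B)ᵀ = A * B) (hB : B.PosDef) :
    (∀ μ ∈ spectrum ℂ (A.map Complex.ofReal), μ.im = 0 ∧ 0 < μ.re) ↔ (A * B).PosDef := by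
  classical
  set S := CFC.sqrt B with hSdef
  have hSpsd : S.PosSemidef := (CFC.sqrt_nonneg B).posSemidef
  have hSS : S * S = B := CFC.sqrt_mul_sqrt_self B hB.posSemidef.nonneg
  clear_value S
  clear hSdef
  have hSsymm : Sᵀ = S := by
    have := hSpsd.isHermitian
    rwa [Matrix.IsHermitian, Matrix.conjTranspose_eq_transpose_of_trivial] at this
  have hSdetU : IsUnit S.det := by
    have hBdet : 0 < B.det := hB.det_pos
    rw [← hSS, Matrix.det_mul] at hBdet
    exact (mul_self_pos.mp hBdet).isUnit
  have hSu : IsUnit S := (Matrix.isUnit_iff_isUnit_det S).mpr hSdetU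
  have h1 : S * S⁻¹ = 1 := Matrix.mul_nonsing_inv S hSdetU
  have h2 : S⁻¹ * S = 1 := Matrix.nonsing_inv_mul S hSdetU
  have hSinvT : (S⁻¹)ᵀ = S⁻¹ := by rw [Matrix.transpose_nonsing_inv, hSsymm]
  have hSinvU : IsUnit S⁻¹ := Matrix.isUnit_nonsing_inv_iff.mpr hSu
  set M := S⁻¹ * (A * B) * S⁻¹ with hMdef
  have hABM : S * M * S = A * B := by
    rw [hMdef]
    simp only [← Matrix.mul_assoc]
    rw [h1, one_mul, Matrix.mul_assoc, h2, mul_one]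
  have hA : A = S * M * S⁻¹ := by
    rw [hMdef]
    simp only [← Matrix.mul_assoc]
    rw [h1, one_mul, ← hSS, ← Matrix.mul_assoc,
      Matrix.mul_assoc (A * S), h1, mul_one, Matrix.mul_assoc, h1, mul_one]
  have hMsymm : Mᵀ = M := by
    rw [hMdef, Matrix.transpose_mul, Matrix.transpose_mul, hSinvT, hAB]
    exact (Matrix.mul_assoc _ _ _).symm
  have hMherm : M.IsHermitian := by
    rw [Matrix.IsHermitian, Matrix.conjTranspose_eq_transpose_of_trivial]
    exact hMsymm
  -- spectrum equality via conjugation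
  have hudet : IsUnit (S.map Complex.ofReal).det := by
    rw [isUnit_iff_ne_zero, det_map]
    exact_mod_cast hSdetU.ne_zero
  have hcu : IsUnit (S.map Complex.ofReal) := (Matrix.isUnit_iff_isUnit_det _).mpr hudet
  have hinvmap : (S⁻¹).map Complex.ofReal = (S.map Complex.ofReal)⁻¹ := by
    refine (Matrix.inv_eq_right_inv ?_).symm
    rw [← map_mul', h1, map_one']
  have hspec : spectrum ℂ (A.map Complex.ofReal) = spectrum ℂ (M.map Complex.ofReal) := by
    have hmapA : A.map Complex.ofReal
        = (hcu.unit : Matrix (Fin n) (Fin n) ℂ) * M.map Complex.ofReal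
          * ((hcu.unit⁻¹ : (Matrix (Fin n) (Fin n) ℂ)ˣ) : Matrix (Fin n) (Fin n) ℂ) := by
      rw [Matrix.coe_units_inv, IsUnit.unit_spec, ← hinvmap, ← map_mul', ← map_mul', ← hA]
    rw [hmapA]
    exact spectrum.units_conjugate
  rw [hspec]
  constructor
  · intro h
    have heig : ∀ i, 0 < hMherm.eigenvalues i := by
      intro i
      have hmem := hMherm.eigenvalues_mem_spectrum_real i
      have := h _ (real_spectrum_mem hmem)
      simpa using this.2
    have hMpd : M.PosDef := by
      refine posdef_of_psd_isUnit (hMherm.posSemidef_iff_eigenvalues_nonneg.mpr fun i => (heig i).le) ?_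
      rw [Matrix.isUnit_iff_isUnit_det, isUnit_iff_ne_zero, hMherm.det_eq_prod_eigenvalues]
      have : 0 < ∏ i, hMherm.eigenvalues i := Finset.prod_pos fun i _ => heig i
      simpa using this.ne'
    rw [← hABM]
    exact posdef_conj hMpd hSsymm hSu
  · intro hABpd
    have hMpd : M.PosDef := by
      rw [hMdef]
      exact posdef_conj hABpd hSinvT hSinvU
    intro μ hμ
    obtain ⟨v, hv, hveq⟩ := (mem_spectrum_iff_exists _ μ).mp hμ
    have hMcpd := posDef_map hMpd
    have hq : (0:ℂ) < star v ⬝ᵥ (M.map Complex.ofReal) *ᵥ v := hMcpd.dotProduct_mulVec_pos hv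
    have hc : (0:ℂ) < star v ⬝ᵥ v := Matrix.dotProduct_star_self_pos_iff.mpr hv
    rw [hveq, dotProduct_smul, smul_eq_mul] at hq
    set c := star v ⬝ᵥ v with hcdef
    rw [Complex.lt_def] at hq hc
    simp only [Complex.zero_re, Complex.zero_im] at hq hc
    obtain ⟨hq1, hq2⟩ := hq
    obtain ⟨hc1, hc2⟩ := hc
    have hq2' : μ.im * c.re = 0 := by
      have h6 := hq2.symm
      rw [Complex.mul_im, ← hc2, mul_zero, zero_add] at h6
      exact h6
    have him : μ.im = 0 := by
      rcases mul_eq_zero.mp hq2' with h | h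
      · exact h
      · exact absurd h hc1.ne'
    refine ⟨him, ?_⟩
    rw [Complex.mul_re, ← hc2, mul_zero, sub_zero] at hq1
    nlinarith [hc1, hq1]

private lemma isPD_iff {n : ℕ} (P : Matrix (Fin n) (Fin n) ℝ) : P.IsPD ↔ P.PosDef := by
  rw [posDef_iff_dotProduct_mulVec]
  constructor
  · rintro ⟨h1, h2⟩
    refine ⟨?_, fun x hx => ?_⟩
    · rw [Matrix.IsHermitian, Matrix.conjTranspose_eq_transpose_of_trivial]; exact h1
    · rw [show star x = x from funext fun i => star_trivial _]; exact h2 x hx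
  · rintro ⟨h1, h2⟩
    refine ⟨?_, fun v hv => ?_⟩
    · rwa [Matrix.IsHermitian, Matrix.conjTranspose_eq_transpose_of_trivial] at h1
    · have := h2 hv
      rwa [show star v = v from funext fun i => star_trivial _] at this

private lemma isND_iff {n : ℕ} (P : Matrix (Fin n) (Fin n) ℝ) : P.IsND ↔ (-P).PosDef := by
  rw [← isPD_iff]
  constructor
  · rintro ⟨h1, h2⟩
    refine ⟨by rw [Matrix.transpose_neg, h1], fun v hv => ?_⟩
    have := h2 v hv
    rw [Matrix.neg_mulVec, dotProduct_neg]
    linarith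
  · rintro ⟨h1, h2⟩
    have h1' : Pᵀ = P := by rwa [Matrix.transpose_neg, neg_inj] at h1
    refine ⟨h1', fun v hv => ?_⟩
    have := h2 v hv
    rw [Matrix.neg_mulVec, dotProduct_neg] at this
    linarith

theorem stmt_1 {n : ℕ} (A B : Matrix (Fin n) (Fin n) ℝ)
    (hAB : (A * B)ᵀ = A * B) (hB : B.IsPD) :
    ((∀ μ ∈ spectrum ℂ (A.map Complex.ofReal), μ.im = 0 ∧ 0 < μ.re) ↔ (A * B).IsPD) ∧
    ((∀ μ ∈ spectrum ℂ (A.map Complex.ofReal), μ.im = 0 ∧ μ.re < 0) ↔ (A * B).IsND) := by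
  have hBpd : B.PosDef := (isPD_iff B).mp hB
  constructor
  · rw [isPD_iff]
    exact key A B hAB hBpd
  · rw [isND_iff]
    have hAB' : ((-A) * B)ᵀ = (-A) * B := by
      rw [neg_mul, Matrix.transpose_neg, hAB]
    have h := key (-A) B hAB' hBpd
    rw [show (-A) * B = -(A * B) from neg_mul A B] at h
    rw [← h]
    have hmapneg : (-A).map Complex.ofReal = -(A.map Complex.ofReal) := by
      ext i j
      simp
    rw [hmapneg, ← spectrum.neg_eq]
    constructor
    · intro hall μ hμ
      rw [Set.mem_neg] at hμ
      obtain ⟨h1, h2⟩ := hall _ hμ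
      refine ⟨by simpa using h1, ?_⟩
      simp only [Complex.neg_re] at h2
      linarith
    · intro hall μ hμ
      have hμ' : -μ ∈ -spectrum ℂ (A.map Complex.ofReal) := by
        rw [Set.mem_neg, neg_neg]
        exact hμ
      obtain ⟨h1, h2⟩ := hall _ hμ'
      refine ⟨by simpa using h1, ?_⟩
      simp only [Complex.neg_re] at h2
      linarith
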